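/- Let Δ_P ∈ (0, 1/2), let θ_max ≥ 1, and define c₀ := min{ Δ_P·ln(1/Δ_P), (1 − Δ_P)·ln(1/(1 − Δ_P)) } / θ_max². Then for every real p with Δ_P ≤ p ≤ 1 − Δ_P and all reals θ, θ' with 1 ≤ θ ≤ θ_max and 1 ≤ θ' ≤ θ_max, the expected log-likelihood ratio satisfies p^{1/θ'}·ln(p^{1/θ}/p^{1/θ'}) + (1 − p^{1/θ'})·ln((1 − p^{1/θ})/(1 − p^{1/θ'})) ≤ −2·c₀²·(θ − θ')². -/

import Mathlib

set_option maxHeartbeats 1000000 in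
/-- Bernoulli Pinsker inequality. -/
lemma bern_pinsker {q q' : ℝ} (hq0 : 0 < q) (hq1 : q < 1) (hq'0 : 0 < q') (hq'1 : q' < 1) :
    q' * Real.log (q / q') + (1 - q') * Real.log ((1 - q) / (1 - q'))
      ≤ -(2 * (q - q') ^ 2) := by
  set F : ℝ → ℝ := fun x => q' * Real.log x + (1 - q') * Real.log (1 - x) + 2 * (x - q') ^ 2
    with hFdef
  have hF : ∀ x ∈ Set.Ioo (0:ℝ) 1, HasDerivAt F
      (q' / x - (1 - q') / (1 - x) + 4 * (x - q')) x := by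
    intro x hx
    have h1 : HasDerivAt (fun x : ℝ => Real.log x) x⁻¹ x := Real.hasDerivAt_log hx.1.ne'
    have h2 : HasDerivAt (fun x : ℝ => (1 : ℝ) - x) (-1) x := by
      simpa using (hasDerivAt_id x).const_sub 1
    have h3 : HasDerivAt (fun x : ℝ => Real.log (1 - x)) ((1 - x)⁻¹ * (-1)) x :=
      (Real.hasDerivAt_log (by linarith [hx.2] : (1:ℝ) - x ≠ 0)).comp x h2
    have h4 : HasDerivAt (fun x : ℝ => 2 * (x - q') ^ 2) (2 * (2 * (x - q'))) x := by
      have : HasDerivAt (fun x : ℝ => (x - q') ^ 2) (2 * (x - q')) x := by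
        simpa using ((hasDerivAt_id x).sub_const q').fun_pow 2
      simpa using this.const_mul 2
    have : HasDerivAt F (q' * x⁻¹ + (1 - q') * ((1 - x)⁻¹ * -1) + 2 * (2 * (x - q'))) x :=
      ((h1.const_mul q').add (h3.const_mul (1 - q'))).add h4
    convert this using 1
    have hx0 : x ≠ 0 := hx.1.ne'
    have hx1 : (1:ℝ) - x ≠ 0 := by linarith [hx.2]
    field_simp
    ring
  have hderiv_eq : ∀ x ∈ Set.Ioo (0:ℝ) 1,
      deriv F x = q' / x - (1 - q') / (1 - x) + 4 * (x - q') := fun x hx => (hF x hx).deriv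
  have hcont : ∀ s : Set ℝ, s ⊆ Set.Ioo 0 1 → ContinuousOn F s := by
    intro s hs
    exact fun x hx => ((hF x (hs hx)).differentiableAt.continuousAt).continuousWithinAt
  have hnum : ∀ x ∈ Set.Ioo (0:ℝ) 1,
      q' / x - (1 - q') / (1 - x) + 4 * (x - q')
        = ((q' - x) + 4 * (x - q') * (x * (1 - x))) / (x * (1 - x)) := by
    intro x hx
    have h0 : x ≠ 0 := hx.1.ne'
    have h1 : (1:ℝ) - x ≠ 0 := by linarith [hx.2]
    field_simp
    ring
  have key : F q ≤ F q' := by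
    rcases le_total q' q with hle | hle
    · have hanti : AntitoneOn F (Set.Icc q' q) := by
        apply antitoneOn_of_deriv_nonpos (convex_Icc _ _)
        · exact hcont _ (fun x hx => ⟨lt_of_lt_of_le hq'0 hx.1, lt_of_le_of_lt hx.2 hq1⟩)
        · intro x hx
          rw [interior_Icc] at hx
          exact (hF x ⟨lt_trans hq'0 hx.1, lt_trans hx.2 hq1⟩).differentiableAt.differentiableWithinAt
        · intro x hx
          rw [interior_Icc] at hx
          have hx01 : x ∈ Set.Ioo (0:ℝ) 1 := ⟨lt_trans hq'0 hx.1, lt_trans hx.2 hq1⟩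
          rw [hderiv_eq x hx01, hnum x hx01]
          apply div_nonpos_of_nonpos_of_nonneg
          · nlinarith [sq_nonneg (2 * x - 1), hx.1.le, hx01.1, hx01.2]
          · nlinarith [hx01.1, hx01.2]
      exact hanti (Set.left_mem_Icc.2 hle) ⟨hle, le_refl q⟩ hle
    · have hmono : MonotoneOn F (Set.Icc q q') := by
        apply monotoneOn_of_deriv_nonneg (convex_Icc _ _)
        · exact hcont _ (fun x hx => ⟨lt_of_lt_of_le hq0 hx.1, lt_of_le_of_lt hx.2 hq'1⟩)
        · intro x hx
          rw [interior_Icc] at hx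
          exact (hF x ⟨lt_trans hq0 hx.1, lt_trans hx.2 hq'1⟩).differentiableAt.differentiableWithinAt
        · intro x hx
          rw [interior_Icc] at hx
          have hx01 : x ∈ Set.Ioo (0:ℝ) 1 := ⟨lt_trans hq0 hx.1, lt_trans hx.2 hq'1⟩
          rw [hderiv_eq x hx01, hnum x hx01]
          apply div_nonneg
          · nlinarith [sq_nonneg (2 * x - 1), hx.2.le, hx01.1, hx01.2]
          · nlinarith [hx01.1, hx01.2]
      exact hmono (Set.left_mem_Icc.2 hle) ⟨hle, le_refl q'⟩ hle
  have e1 : Real.log (q / q') = Real.log q - Real.log q' := Real.log_div hq0.ne' hq'0.ne'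
  have e2 : Real.log ((1 - q) / (1 - q')) = Real.log (1 - q) - Real.log (1 - q') :=
    Real.log_div (by linarith) (by linarith)
  have key2 : q' * Real.log q + (1 - q') * Real.log (1 - q) + 2 * (q - q') ^ 2
      ≤ q' * Real.log q' + (1 - q') * Real.log (1 - q') + 2 * (q' - q') ^ 2 := key
  rw [e1, e2]
  nlinarith [key2]

set_option maxHeartbeats 1000000 in
/-- **Expected log-likelihood ratio bound for the POI model.**
Let `Δ_P ∈ (0, 1/2)`, `θmax ≥ 1` and
`c₀ = min {Δ_P·ln(1/Δ_P), (1-Δ_P)·ln(1/(1-Δ_P))} / θmax²`. Then for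
`Δ_P ≤ p ≤ 1 - Δ_P` and `1 ≤ θ, θ' ≤ θmax`,
`p^(1/θ')·ln(p^(1/θ)/p^(1/θ')) + (1-p^(1/θ'))·ln((1-p^(1/θ))/(1-p^(1/θ')))
  ≤ -2·c₀²·(θ-θ')²`. -/
theorem expected_log_likelihood_ratio_le
    (ΔP : ℝ) (hΔ0 : 0 < ΔP) (hΔ : ΔP < 1 / 2)
    (θmax : ℝ) (hθmax : 1 ≤ θmax)
    (c₀ : ℝ)
    (hc₀ : c₀ = min (ΔP * Real.log (1 / ΔP)) ((1 - ΔP) * Real.log (1 / (1 - ΔP)))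
      / θmax ^ 2)
    (p : ℝ) (hpl : ΔP ≤ p) (hpu : p ≤ 1 - ΔP)
    (θ θ' : ℝ) (hθ1 : 1 ≤ θ) (hθm : θ ≤ θmax) (hθ'1 : 1 ≤ θ') (hθ'm : θ' ≤ θmax) :
    p ^ (1 / θ') * Real.log (p ^ (1 / θ) / p ^ (1 / θ'))
      + (1 - p ^ (1 / θ')) * Real.log ((1 - p ^ (1 / θ)) / (1 - p ^ (1 / θ')))
      ≤ -2 * c₀ ^ 2 * (θ - θ') ^ 2 := by
  have hp0 : 0 < p := lt_of_lt_of_le hΔ0 hpl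
  have hp1 : p < 1 := by linarith
  have hlogp : Real.log p < 0 := Real.log_neg hp0 hp1
  have hmin_def : min (ΔP * Real.log (1 / ΔP)) ((1 - ΔP) * Real.log (1 / (1 - ΔP)))
      = min (Real.negMulLog ΔP) (Real.negMulLog (1 - ΔP)) := by
    simp only [Real.negMulLog, one_div, Real.log_inv]
    ring_nf
  have hmin_le : min (Real.negMulLog ΔP) (Real.negMulLog (1 - ΔP)) ≤ Real.negMulLog p := by
    have hseg : p ∈ segment ℝ ΔP (1 - ΔP) := by
      rw [segment_eq_Icc (by linarith)]
      exact ⟨hpl, hpu⟩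
    exact Real.concaveOn_negMulLog.ge_on_segment (le_of_lt hΔ0) (by
      simp only [Set.mem_Ici]; linarith) hseg
  have hc₀nn : 0 ≤ c₀ := by
    rw [hc₀, hmin_def]
    have h1 : 0 ≤ Real.negMulLog ΔP := by
      have := Real.log_neg hΔ0 (by linarith)
      rw [Real.negMulLog]; nlinarith
    have h2 : 0 ≤ Real.negMulLog (1 - ΔP) := by
      have := Real.log_neg (by linarith : (0:ℝ) < 1 - ΔP) (by linarith)
      rw [Real.negMulLog]; nlinarith
    positivity
  -- key gap bound
  have key : ∀ a b : ℝ, 1 ≤ a → a ≤ θmax → 1 ≤ b → b ≤ θmax → b ≤ a →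
      c₀ * (a - b) ≤ p ^ (1/a) - p ^ (1/b) := by
    intro a b ha1 ham hb1 hbm hba
    have ha0 : (0:ℝ) < a := by linarith
    have hb0 : (0:ℝ) < b := by linarith
    have hab : (0:ℝ) ≤ a - b := by linarith
    have e_a : p ^ (1/a) = Real.exp (Real.log p * (1/a)) := Real.rpow_def_of_pos hp0 _
    have e_b : p ^ (1/b) = Real.exp (Real.log p * (1/b)) := Real.rpow_def_of_pos hp0 _
    have hexp2 : Real.exp (Real.log p * (1/b)) * (Real.log p * (1/a) - Real.log p * (1/b))
        + Real.exp (Real.log p * (1/b)) ≤ Real.exp (Real.log p * (1/a)) := by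
      have h := Real.add_one_le_exp (Real.log p * (1/a) - Real.log p * (1/b))
      have h2 := mul_le_mul_of_nonneg_left h (Real.exp_pos (Real.log p * (1/b))).le
      rw [← Real.exp_add] at h2
      have h3 : Real.log p * (1/b) + (Real.log p * (1/a) - Real.log p * (1/b))
          = Real.log p * (1/a) := by ring
      rw [h3] at h2
      nlinarith [h2]
    have hq'ge : p ≤ p ^ (1/b) := by
      nth_rewrite 1 [← Real.rpow_one p]
      exact Real.rpow_le_rpow_of_exponent_ge hp0 hp1.le (by
        rw [div_le_one hb0]; linarith)
    have hinv : (a - b) / θmax ^ 2 ≤ 1/b - 1/a := by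
      have h1 : b * a ≤ θmax ^ 2 := by nlinarith
      have h2 : (a - b) / θmax ^ 2 ≤ (a - b) / (b * a) :=
        div_le_div_of_nonneg_left hab (by positivity) h1
      have h3 : (a - b) / (b * a) = 1/b - 1/a := by
        field_simp
      linarith
    have hinv0 : (0:ℝ) ≤ 1/b - 1/a := le_trans (by positivity) hinv
    have step1 : p * (-Real.log p) * ((a - b) / θmax ^ 2)
        ≤ p ^ (1/b) * (-Real.log p) * (1/b - 1/a) := by
      apply mul_le_mul
      · exact mul_le_mul_of_nonneg_right hq'ge (by linarith)
      · exact hinv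
      · exact div_nonneg hab (by positivity)
      · exact mul_nonneg (Real.rpow_pos_of_pos hp0 _).le (by linarith)
    have hp_mul : min (Real.negMulLog ΔP) (Real.negMulLog (1 - ΔP)) ≤ p * (-Real.log p) := by
      have : Real.negMulLog p = p * (-Real.log p) := by rw [Real.negMulLog]; ring
      linarith [hmin_le]
    have step2 : c₀ * (a - b) ≤ p * (-Real.log p) * ((a - b) / θmax ^ 2) := by
      rw [hc₀, hmin_def]
      have h := mul_le_mul_of_nonneg_right hp_mul
        (show (0:ℝ) ≤ (a - b) / θmax ^ 2 by positivity)
      calc min (Real.negMulLog ΔP) (Real.negMulLog (1 - ΔP)) / θmax ^ 2 * (a - b)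
          = min (Real.negMulLog ΔP) (Real.negMulLog (1 - ΔP)) * ((a - b) / θmax ^ 2) := by
            ring
        _ ≤ p * (-Real.log p) * ((a - b) / θmax ^ 2) := h
    have step3 : p ^ (1/b) * (-Real.log p) * (1/b - 1/a) ≤ p ^ (1/a) - p ^ (1/b) := by
      rw [e_a, e_b]
      nlinarith [hexp2]
    linarith
  -- set up q, q'
  have hq0 : 0 < p ^ (1/θ) := Real.rpow_pos_of_pos hp0 _
  have hq1 : p ^ (1/θ) < 1 :=
    Real.rpow_lt_one hp0.le hp1 (div_pos one_pos (by linarith))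
  have hq'0 : 0 < p ^ (1/θ') := Real.rpow_pos_of_pos hp0 _
  have hq'1 : p ^ (1/θ') < 1 :=
    Real.rpow_lt_one hp0.le hp1 (div_pos one_pos (by linarith))
  have hpk := bern_pinsker hq0 hq1 hq'0 hq'1
  have hsq : c₀ ^ 2 * (θ - θ') ^ 2 ≤ (p ^ (1/θ) - p ^ (1/θ')) ^ 2 := by
    rcases le_total θ' θ with h | h
    · have hk := key θ θ' hθ1 hθm hθ'1 hθ'm h
      have h0 : 0 ≤ c₀ * (θ - θ') := mul_nonneg hc₀nn (by linarith)
      have hd : 0 ≤ p ^ (1/θ) - p ^ (1/θ') := le_trans h0 hk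
      calc c₀ ^ 2 * (θ - θ') ^ 2 = (c₀ * (θ - θ')) ^ 2 := by ring
        _ ≤ (p ^ (1/θ) - p ^ (1/θ')) ^ 2 := sq_le_sq' (by linarith) hk
    · have hk := key θ' θ hθ'1 hθ'm hθ1 hθm h
      have h0 : 0 ≤ c₀ * (θ' - θ) := mul_nonneg hc₀nn (by linarith)
      have hd : 0 ≤ p ^ (1/θ') - p ^ (1/θ) := le_trans h0 hk
      calc c₀ ^ 2 * (θ - θ') ^ 2 = (c₀ * (θ' - θ)) ^ 2 := by ring
        _ ≤ (p ^ (1/θ') - p ^ (1/θ)) ^ 2 := sq_le_sq' (by linarith) hk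
        _ = (p ^ (1/θ) - p ^ (1/θ')) ^ 2 := by ring
  linarith [hpk, hsq]
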